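/- Let G be a symmetric 2×2 real matrix with G₁₁ = −G₀₀ and G₀₁ ≠ 0. Then there is no invertible 2×2 real matrix S such that both Sᵀ · J · S and Sᵀ · G · S are diagonal matrices; i.e., the metrics given by J and G cannot be diagonalized simultaneously in any basis. -/
import Mathlib


open Matrix

/-- The Minkowski metric matrix `diag(1, -1)`. -/
def Jmat : Matrix (Fin 2) (Fin 2) ℝ := !![1, 0; 0, -1]

/-- If `G` is a symmetric `2×2` real matrix with `G₁₁ = -G₀₀` and `G₀₁ ≠ 0`, then there is no
invertible matrix `S` making both `Sᵀ * J * S` and `Sᵀ * G * S` diagonal: the two metrics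
cannot be diagonalized simultaneously in any basis. -/
theorem not_simultaneously_diagonalizable (G : Matrix (Fin 2) (Fin 2) ℝ) (hG : Gᵀ = G)
    (h11 : G 1 1 = -G 0 0) (h01 : G 0 1 ≠ 0) :
    ¬ ∃ S : Matrix (Fin 2) (Fin 2) ℝ, IsUnit S ∧
      (Sᵀ * Jmat * S).IsDiag ∧ (Sᵀ * G * S).IsDiag := by
  rintro ⟨S, hS, hJ, hGd⟩
  have h10 : G 1 0 = G 0 1 := by
    have := congrFun (congrFun hG 1) 0
    simpa [Matrix.transpose_apply] using this.symm
  have hdet : S.det ≠ 0 := by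
    simpa [isUnit_iff_ne_zero] using (Matrix.isUnit_iff_isUnit_det S).mp hS
  have hdet2 : S 0 0 * S 1 1 - S 0 1 * S 1 0 ≠ 0 := by
    rwa [Matrix.det_fin_two] at hdet
  have e1 : (Sᵀ * Jmat * S) 0 1 = 0 := hJ (by decide)
  have e2 : (Sᵀ * G * S) 0 1 = 0 := hGd (by decide)
  simp [Matrix.mul_apply, Fin.sum_univ_two, Jmat] at e1 e2
  -- e1 : S00*S01 - S10*S11 = 0 (in some form)
  rw [h11, h10] at e2
  -- e2 has G00 and G01 coefficients
  have key : S 0 0 * S 1 1 + S 1 0 * S 0 1 = 0 := by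
    have h := e2
    have : G 0 1 * (S 0 0 * S 1 1 + S 1 0 * S 0 1) = 0 := by
      linear_combination h - G 0 0 * e1
    exact (mul_eq_zero.mp this).resolve_left h01
  have key2 : S 0 0 * S 0 1 - S 1 0 * S 1 1 = 0 := by linarith [e1]
  have h0 : (S 0 0 * S 0 1)^2 + (S 1 0 * S 0 1)^2 = 0 := by
    linear_combination (S 0 0 * S 0 1) * key2 + (S 1 0 * S 0 1) * key
  have h1 : S 1 0 * S 0 1 = 0 := by
    nlinarith [sq_nonneg (S 0 0 * S 0 1), sq_nonneg (S 1 0 * S 0 1)]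
  exact hdet2 (by linear_combination key - 2 * h1)
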